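/- Let x ≥ 1 and m ≥ 1 be integers. Define P_0 = 1 and, for k ≥ 1, P_k = −∑_{i=0}^{k−1} [x > k−i]·P_i, and set a_k = k·[x > k] for every integer k ≥ 0. Then ∑_{k=0}^{m−1} a_{m−k}·P_k = 1 − x·[x divides m]; consequently (1 − ∑_{k=0}^{m−1} a_{m−k}·P_k)/x = [x divides m]. -/

import Mathlib

private lemma libri_mod_succ (xn n : ℕ) (h1 : 1 ≤ xn) :
    (((n+1) % xn : ℕ) : ℤ) - ((n % xn : ℕ) : ℤ)
      = 1 - (xn : ℤ) * (if xn ∣ (n+1) then 1 else 0) := by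
  by_cases hd : xn ∣ (n+1)
  · obtain ⟨q, hq⟩ := hd
    have hq1 : 1 ≤ q := by
      rcases Nat.eq_zero_or_pos q with h | h
      · subst h; simp at hq
      · exact h
    obtain ⟨q', rfl⟩ : ∃ q', q = q' + 1 := ⟨q - 1, by omega⟩
    have hmul : xn * (q' + 1) = xn * q' + xn := by ring
    have hn : n = (xn - 1) + xn * q' := by omega
    have h2 : n % xn = xn - 1 := by
      rw [hn, Nat.add_mul_mod_self_left, Nat.mod_eq_of_lt (by omega)]
    have h3 : (n + 1) % xn = 0 := by rw [hq]; exact Nat.mul_mod_right _ _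
    rw [h2, h3, if_pos ⟨q' + 1, hq⟩]
    push_cast [h1]
    ring
  · have hx2 : 2 ≤ xn := by
      rcases Nat.lt_or_ge xn 2 with h | h
      · have hx1 : xn = 1 := by omega
        exact absurd (hx1 ▸ one_dvd (n+1)) hd
      · exact h
    have h2 : (n + 1) % xn = (n % xn + 1) % xn := by
      conv_lhs => rw [Nat.add_mod]
      rw [Nat.mod_eq_of_lt (show 1 < xn by omega)]
    have hlt : n % xn < xn := Nat.mod_lt _ (by omega)
    have h3 : n % xn + 1 < xn := by
      rcases Nat.lt_or_ge (n % xn + 1) xn with h | h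
      · exact h
      · have he : n % xn + 1 = xn := by omega
        exfalso
        apply hd
        apply Nat.dvd_of_mod_eq_zero
        rw [h2, he, Nat.mod_self]
    rw [h2, Nat.mod_eq_of_lt h3, if_neg hd]
    push_cast
    ring

private lemma libri_sum_P (xn : ℕ) (hxn : 1 ≤ xn) (P : ℕ → ℤ) (hP0 : P 0 = 1)
    (hrec : ∀ k : ℕ, 1 ≤ k →
      P k = -∑ i ∈ Finset.range k,
        (if (k : ℤ) - (i : ℤ) < (xn : ℤ) then (1 : ℤ) else 0) * P i) :
    ∀ k : ℕ, (∑ i ∈ Finset.range (k+1), P i) = if xn ∣ k then 1 else 0 := by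
  intro k
  induction k using Nat.strong_induction_on with
  | _ k ih =>
    match k with
    | 0 => simp [hP0]
    | (n+1) =>
      have h0 : ∑ i ∈ Finset.range (n+2),
          (if ((n+1 : ℕ) : ℤ) - (i : ℤ) < (xn : ℤ) then (1:ℤ) else 0) * P i = 0 := by
        rw [Finset.sum_range_succ]
        have hr := hrec (n+1) (by omega)
        have hc : (((n+1 : ℕ) : ℤ) - ((n+1 : ℕ) : ℤ) < (xn : ℤ)) := by push_cast; omega
        rw [if_pos hc, one_mul]
        linarith [hr]
      have hIco : ∑ i ∈ Finset.Ico (n+2-xn) (n+2), P i = 0 := by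
        rw [← h0]
        rw [show ∑ i ∈ Finset.range (n+2),
            (if ((n+1 : ℕ) : ℤ) - (i : ℤ) < (xn : ℤ) then (1:ℤ) else 0) * P i
          = ∑ i ∈ (Finset.range (n+2)).filter
              (fun i : ℕ => ((n+1 : ℕ) : ℤ) - (i : ℤ) < (xn : ℤ)), P i from by
          rw [Finset.sum_filter]
          refine Finset.sum_congr rfl fun i _ => ?_
          split <;> simp]
        congr 1
        refine Finset.ext fun i => ?_
        simp only [Finset.mem_filter, Finset.mem_range, Finset.mem_Ico]
        omega
      have hsplit : ∑ i ∈ Finset.range (n+2), P i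
          = ∑ i ∈ Finset.range (n+2-xn), P i := by
        rw [Finset.range_eq_Ico, ← Finset.sum_Ico_consecutive _ (Nat.zero_le (n+2-xn)) (by omega : n+2-xn ≤ n+2), hIco, add_zero, ← Finset.range_eq_Ico]
      rcases Nat.lt_or_ge (n+1) xn with hlt | hge
      · have : n + 2 - xn = 0 := by omega
        rw [hsplit, this, Finset.range_zero, Finset.sum_empty]
        have hnd : ¬ xn ∣ (n+1) := by
          intro hdvd
          have := Nat.le_of_dvd (by omega) hdvd
          omega
        rw [if_neg hnd]
      · have hn2 : n + 2 - xn = (n + 1 - xn) + 1 := by omega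
        rw [hsplit, hn2, ih (n+1-xn) (by omega)]
        have hiff : xn ∣ (n + 1 - xn) ↔ xn ∣ (n+1) := by
          constructor
          · intro ⟨c, hc⟩
            have hmul : xn * (c + 1) = xn * c + xn := by ring
            exact ⟨c + 1, by omega⟩
          · intro ⟨c, hc⟩
            have hc1 : 1 ≤ c := by
              rcases Nat.eq_zero_or_pos c with h | h
              · subst h; simp at hc
              · exact h
            obtain ⟨c', rfl⟩ : ∃ c', c = c' + 1 := ⟨c - 1, by omega⟩
            have hmul : xn * (c' + 1) = xn * c' + xn := by ring
            exact ⟨c', by omega⟩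
        by_cases hdd : xn ∣ (n+1)
        · rw [if_pos (hiff.mpr hdd), if_pos hdd]
        · rw [if_neg (fun h => hdd (hiff.mp h)), if_neg hdd]

private lemma libri_F (xn : ℕ) (hxn : 1 ≤ xn) :
    ∀ m : ℕ, ∑ k ∈ Finset.range m,
        (((m - k : ℕ) : ℤ) * (if (m - k : ℕ) < xn then (1:ℤ) else 0))
          * (if xn ∣ k then (1:ℤ) else 0)
      = ((m % xn : ℕ) : ℤ) := by
  intro m
  by_cases hd : xn ∣ m
  · have hmz : m % xn = 0 := by obtain ⟨t, rfl⟩ := hd; exact Nat.mul_mod_right _ _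
    rw [hmz]
    push_cast
    apply Finset.sum_eq_zero
    intro k hk
    rw [Finset.mem_range] at hk
    by_cases hdk : xn ∣ k
    · by_cases hlt : m - k < xn
      · exfalso
        have h1 : xn ∣ (m - k) := Nat.dvd_sub hd hdk
        have h2 : 0 < m - k := by omega
        have := Nat.le_of_dvd h2 h1
        omega
      · rw [if_neg hlt]; ring
    · rw [if_neg hdk]; ring
  · have hm1 : 1 ≤ m := by
      rcases Nat.eq_zero_or_pos m with h | h
      · exact absurd (h ▸ Dvd.intro 0 rfl) hd
      · exact h
    set r := m % xn with hr
    have hr1 : 1 ≤ r := by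
      rcases Nat.eq_zero_or_pos r with h | h
      · exact absurd (Nat.dvd_of_mod_eq_zero h) hd
      · exact h
    have hrlt : r < xn := Nat.mod_lt _ (by omega)
    have hrm : r ≤ m := Nat.mod_le _ _
    have hk0d : xn ∣ (m - r) := by
      have := Nat.mod_add_div m xn
      exact ⟨m / xn, by omega⟩
    rw [Finset.sum_eq_single_of_mem (m - r) (Finset.mem_range.mpr (by omega))]
    · rw [if_pos hk0d, show m - (m - r) = r from by omega, if_pos hrlt]
      ring
    · intro k hk hne
      rw [Finset.mem_range] at hk
      by_cases hdk : xn ∣ k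
      · by_cases hlt : m - k < xn
        · exfalso
          apply hne
          have hkm : k ≤ m := by omega
          obtain ⟨t, hkt⟩ := hdk
          have hmk : (m - k) % xn = m % xn := by
            conv_rhs => rw [show m = xn * t + (m - k) from by omega]
            rw [Nat.mul_add_mod]
          have : m - k = r := by
            rw [hr, ← hmk, Nat.mod_eq_of_lt hlt]
          omega
        · rw [if_neg hlt]; ring
      · rw [if_neg hdk]; ring

/-- Libri's divisibility detector, in Iverson-bracket form: with `x ≥ 1`, `m ≥ 1`,
`P 0 = 1`, `P k = -∑_{i=0}^{k-1} [x > k-i]·P i` for `k ≥ 1`, and `a k = k·[x > k]`,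
one has `∑_{k=0}^{m-1} a (m-k) · P k = 1 - x·[x ∣ m]`, hence
`(1 - ∑_{k=0}^{m-1} a (m-k) · P k)/x = [x ∣ m]`. -/
theorem stmt_1 (x : ℤ) (hx : 1 ≤ x) (m : ℕ) (hm : 1 ≤ m)
    (P : ℕ → ℤ) (hP0 : P 0 = 1)
    (hrec : ∀ k : ℕ, 1 ≤ k →
      P k = -∑ i ∈ Finset.range k,
        (if (k : ℤ) - (i : ℤ) < x then (1 : ℤ) else 0) * P i)
    (a : ℕ → ℤ)
    (ha : ∀ k : ℕ, a k = (k : ℤ) * (if (k : ℤ) < x then (1 : ℤ) else 0)) :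
    (∑ k ∈ Finset.range m, a (m - k) * P k)
        = 1 - x * (if x ∣ (m : ℤ) then (1 : ℤ) else 0) ∧
    (1 - ∑ k ∈ Finset.range m, a (m - k) * P k) / x
        = (if x ∣ (m : ℤ) then (1 : ℤ) else 0) := by
  lift x to ℕ using (by omega) with xn
  have hxn : 1 ≤ xn := by exact_mod_cast hx
  -- closed form of P
  have hS := libri_sum_P xn hxn P hP0 hrec
  have hPclosed : ∀ k : ℕ, P k = (if xn ∣ k then (1:ℤ) else 0)
      - (if k ≠ 0 ∧ xn ∣ (k - 1) then (1:ℤ) else 0) := by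
    intro k
    match k with
    | 0 => simp [hP0]
    | (n+1) =>
      have h1 := hS (n+1)
      have h2 := hS n
      rw [Finset.sum_range_succ, h2] at h1
      have hcond : ((n+1 ≠ 0) ∧ xn ∣ (n + 1 - 1)) ↔ xn ∣ n := by
        constructor
        · exact fun h => by simpa using h.2
        · exact fun h => ⟨by omega, by simpa using h⟩
      by_cases hdn : xn ∣ n
      · rw [if_pos (hcond.mpr hdn)] at *
        rw [if_pos hdn] at h1
        linarith
      · rw [if_neg (fun h => hdn (hcond.mp h))]
        rw [if_neg hdn] at h1
        linarith
  -- rewrite a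
  have ha' : ∀ j : ℕ, a j = (j : ℤ) * (if j < xn then (1:ℤ) else 0) := by
    intro j
    rw [ha j]
    congr 1
    by_cases h : j < xn
    · rw [if_pos h, if_pos (by exact_mod_cast Nat.cast_lt.mpr h)]
    · rw [if_neg h, if_neg (by push_cast; omega)]
  obtain ⟨n, rfl⟩ : ∃ n, m = n + 1 := ⟨m - 1, by omega⟩
  have hmain : (∑ k ∈ Finset.range (n+1), a (n + 1 - k) * P k)
      = 1 - (xn : ℤ) * (if (xn:ℤ) ∣ ((n+1 : ℕ) : ℤ) then (1 : ℤ) else 0) := by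
    have hsum : ∑ k ∈ Finset.range (n+1), a (n + 1 - k) * P k
        = (∑ k ∈ Finset.range (n+1),
            (((n + 1 - k : ℕ) : ℤ) * (if (n + 1 - k : ℕ) < xn then (1:ℤ) else 0))
              * (if xn ∣ k then (1:ℤ) else 0))
          - (∑ k ∈ Finset.range (n+1),
            (((n + 1 - k : ℕ) : ℤ) * (if (n + 1 - k : ℕ) < xn then (1:ℤ) else 0))
              * (if k ≠ 0 ∧ xn ∣ (k - 1) then (1:ℤ) else 0)) := by
      rw [← Finset.sum_sub_distrib]
      refine Finset.sum_congr rfl fun k _ => ?_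
      rw [ha' (n+1-k), hPclosed k]
      ring
    have hsecond : (∑ k ∈ Finset.range (n+1),
            (((n + 1 - k : ℕ) : ℤ) * (if (n + 1 - k : ℕ) < xn then (1:ℤ) else 0))
              * (if k ≠ 0 ∧ xn ∣ (k - 1) then (1:ℤ) else 0))
        = ((n % xn : ℕ) : ℤ) := by
      rw [Finset.sum_range_succ']
      have hz : (((n + 1 - 0 : ℕ) : ℤ) * (if (n + 1 - 0 : ℕ) < xn then (1:ℤ) else 0))
          * (if (0 : ℕ) ≠ 0 ∧ xn ∣ (0 - 1 : ℕ) then (1:ℤ) else 0) = 0 := by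
        simp
      rw [hz, add_zero, ← libri_F xn hxn n]
      refine Finset.sum_congr rfl fun j hj => ?_
      rw [Finset.mem_range] at hj
      have h1 : n + 1 - (j + 1) = n - j := by omega
      have h2 : ((j + 1 ≠ 0) ∧ xn ∣ (j + 1 - 1)) ↔ xn ∣ j := by
        constructor
        · exact fun h => by simpa using h.2
        · exact fun h => ⟨by omega, by simpa using h⟩
      rw [h1]
      by_cases hdj : xn ∣ j
      · rw [if_pos (h2.mpr hdj), if_pos hdj]
      · rw [if_neg (fun h => hdj (h2.mp h)), if_neg hdj]
    rw [hsum, libri_F xn hxn (n+1), hsecond]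
    have hdvd_iff : (xn:ℤ) ∣ ((n+1 : ℕ) : ℤ) ↔ xn ∣ (n+1) := Int.natCast_dvd_natCast
    by_cases hd : xn ∣ (n+1)
    · rw [if_pos (hdvd_iff.mpr hd)]
      have := libri_mod_succ xn n hxn
      rw [if_pos hd] at this
      linarith
    · rw [if_neg (fun h => hd (hdvd_iff.mp h))]
      have := libri_mod_succ xn n hxn
      rw [if_neg hd] at this
      linarith
  refine ⟨hmain, ?_⟩
  rw [hmain]
  have hx0 : (xn : ℤ) ≠ 0 := by positivity
  rw [show (1 : ℤ) - (1 - (xn : ℤ) * (if (xn:ℤ) ∣ ((n+1 : ℕ) : ℤ) then (1 : ℤ) else 0))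
    = (xn : ℤ) * (if (xn:ℤ) ∣ ((n+1 : ℕ) : ℤ) then (1 : ℤ) else 0) from by ring]
  exact Int.mul_ediv_cancel_left _ hx0
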